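/- The condensation of a clause is unique up to variable renaming: if D₁ and D₂ are both condensations of a clause C, then D₁ and D₂ are variants of each other (each can be obtained from the other by a renaming substitution). -/

import Mathlib

/-- Terms: variables and constants. -/
inductive FOTerm (V C : Type) : Type
  | var : V → FOTerm V C
  | const : C → FOTerm V C
deriving DecidableEq

/-- A function-free atom: a predicate applied to a list of terms. -/
abbrev FOAtom (P V C : Type) := P × List (FOTerm V C)

/-- A literal: a sign (`true` = positive) and an atom. -/
abbrev FOLit (P V C : Type) := Bool × FOAtom P V C

def substT {V C : Type} (σ : V → FOTerm V C) : FOTerm V C → FOTerm V C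
  | .var v => σ v
  | .const c => .const c

def substLit {P V C : Type} (σ : V → FOTerm V C) (l : FOLit P V C) : FOLit P V C :=
  (l.1, l.2.1, l.2.2.map (substT σ))

/-- Clause `Cl` subsumes clause `Dl`: some substitution maps every literal of `Cl`
into `Dl`. -/
def Subsumes {P V C : Type} (Cl Dl : Finset (FOLit P V C)) : Prop :=
  ∃ σ : V → FOTerm V C, ∀ l ∈ Cl, substLit σ l ∈ Dl

/-- `Dl` is a condensation of `Cl`: a subset of `Cl` subsumed by `Cl` that has the
least number of literals among all such subsets. -/
def IsCondensation {P V C : Type} (Dl Cl : Finset (FOLit P V C)) : Prop :=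
  Dl ⊆ Cl ∧ Subsumes Cl Dl ∧
    ∀ Dl' : Finset (FOLit P V C), Dl' ⊆ Cl → Subsumes Cl Dl' → Dl.card ≤ Dl'.card

/-- `Dl₂` is obtained from `Dl₁` by a renaming substitution (an injective map of
variables to variables). -/
def IsRenamingOf {P V C : Type} [DecidableEq P] [DecidableEq V] [DecidableEq C]
    (Dl₁ Dl₂ : Finset (FOLit P V C)) : Prop :=
  ∃ ρ : V → V, Function.Injective ρ ∧
    Dl₁.image (substLit fun v => FOTerm.var (ρ v)) = Dl₂

set_option linter.unusedSectionVars false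

namespace CondAux

variable {P V C : Type}

def termVar : FOTerm V C → Option V
  | .var v => some v
  | .const _ => none

lemma substT_comp (σ₁ σ₂ : V → FOTerm V C) (t : FOTerm V C) :
    substT σ₁ (substT σ₂ t) = substT (fun v => substT σ₁ (σ₂ v)) t := by
  cases t <;> rfl

lemma substLit_comp (σ₁ σ₂ : V → FOTerm V C) (l : FOLit P V C) :
    substLit σ₁ (substLit σ₂ l) = substLit (fun v => substT σ₁ (σ₂ v)) l := by
  unfold substLit
  simp [List.map_map, Function.comp_def, substT_comp]

variable [DecidableEq V]

def litVars (l : FOLit P V C) : Finset V := (l.2.2.filterMap termVar).toFinset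

lemma mem_litVars {v : V} {l : FOLit P V C} :
    v ∈ litVars l ↔ FOTerm.var v ∈ l.2.2 := by
  simp only [litVars, List.mem_toFinset, List.mem_filterMap]
  constructor
  · rintro ⟨t, ht, hv⟩
    cases t with
    | var w => cases hv; exact ht
    | const c => simp [termVar] at hv
  · intro h; exact ⟨_, h, rfl⟩

lemma substLit_congr {σ σ' : V → FOTerm V C} {l : FOLit P V C}
    (h : ∀ v ∈ litVars l, σ v = σ' v) : substLit σ l = substLit σ' l := by
  unfold substLit
  have : l.2.2.map (substT σ) = l.2.2.map (substT σ') := by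
    apply List.map_congr_left
    intro t ht
    cases t with
    | var v => exact h v (mem_litVars.mpr ht)
    | const c => rfl
  rw [this]

def varCount (l : FOLit P V C) : ℕ := l.2.2.countP (fun t => (termVar t).isSome)

lemma varCount_subst (σ : V → FOTerm V C) (l : FOLit P V C) :
    varCount (substLit σ l) = l.2.2.countP (fun t => (termVar (substT σ t)).isSome) := by
  unfold varCount substLit
  simp [List.countP_map, Function.comp_def]

lemma subst_isSome {σ : V → FOTerm V C} {t : FOTerm V C}
    (h : (termVar (substT σ t)).isSome) : (termVar t).isSome := by
  cases t with
  | var v => rfl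
  | const c => simp [substT, termVar] at h

lemma varCount_subst_le (σ : V → FOTerm V C) (l : FOLit P V C) :
    varCount (substLit σ l) ≤ varCount l := by
  rw [varCount_subst]
  exact List.countP_mono_left fun t _ h => subst_isSome h

/-- generic list lemma: if `p → q` pointwise and counts agree, then `q → p` pointwise. -/
lemma countP_rev {α : Type*} {p q : α → Bool} :
    ∀ ts : List α, (∀ t ∈ ts, p t → q t) → ts.countP q ≤ ts.countP p →
      ∀ t ∈ ts, q t → p t := by
  intro ts
  induction ts with
  | nil => intro _ _ t ht; simp at ht
  | cons a ts ih =>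
    intro hpq hle t ht hq
    have hmono : ts.countP p ≤ ts.countP q :=
      List.countP_mono_left fun x hx => hpq x (List.mem_cons_of_mem _ hx)
    rw [List.countP_cons, List.countP_cons] at hle
    have hite : (if p a = true then 1 else 0) ≤ (if q a = true then 1 else 0) := by
      by_cases hpa : p a = true
      · simp [hpa, hpq a List.mem_cons_self hpa]
      · simp [hpa]
    have hle' : ts.countP q ≤ ts.countP p := by omega
    rcases List.mem_cons.mp ht with rfl | ht'
    · by_contra hpa
      have hpa' : p t = false := Bool.eq_false_iff.mpr hpa
      simp [hpa', hq] at hle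
      omega
    · exact ih (fun x hx => hpq x (List.mem_cons_of_mem _ hx)) hle' t ht' hq

/-- If substitution preserves the variable count of a literal, every variable of the
literal is mapped to a variable. -/
lemma vars_to_vars {σ : V → FOTerm V C} {l : FOLit P V C}
    (h : varCount l ≤ varCount (substLit σ l)) :
    ∀ v ∈ litVars l, ∃ u, σ v = FOTerm.var u := by
  rw [varCount_subst] at h
  intro v hv
  have := countP_rev (p := fun t => (termVar (substT σ t)).isSome)
    (q := fun t => (termVar t).isSome) l.2.2
    (fun t _ ht => subst_isSome ht) h (FOTerm.var v) (mem_litVars.mp hv) rfl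
  simp only [substT] at this
  cases hσ : σ v with
  | var u => exact ⟨u, rfl⟩
  | const c => rw [hσ] at this; simp [termVar] at this

lemma mem_litVars_subst {σ : V → FOTerm V C} {l : FOLit P V C} {u : V} :
    u ∈ litVars (substLit σ l) ↔ ∃ v ∈ litVars l, σ v = FOTerm.var u := by
  simp only [mem_litVars, substLit, List.mem_map]
  constructor
  · rintro ⟨t, ht, hu⟩
    cases t with
    | var v => exact ⟨v, ht, hu⟩
    | const c => simp [substT] at hu
  · rintro ⟨v, hv, hu⟩
    exact ⟨FOTerm.var v, hv, by simp [substT, hu]⟩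

lemma exists_injective_extend {V : Type} [DecidableEq V] (W : Finset V) (h : V → V)
    (hinj : Set.InjOn h ↑W) : ∃ ρ : V → V, Function.Injective ρ ∧ ∀ v ∈ W, ρ v = h v := by
  classical
  let f : ((↑W : Set V)) ↪ V := ⟨fun x => h x.1, fun a b hab => Subtype.ext (hinj a.2 b.2 hab)⟩
  have hne : Nonempty (V ≃ V) := ⟨Equiv.refl V⟩
  cases finite_or_infinite V with
  | inl hfin =>
      obtain ⟨g, hg⟩ := Cardinal.extend_function_finite f hne
      exact ⟨g, g.injective, fun v hv => hg ⟨v, hv⟩⟩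
  | inr hinf =>
      have hlt : Cardinal.mk (↑W : Set V) < Cardinal.mk V :=
        lt_of_lt_of_le W.finite_toSet.lt_aleph0 (Cardinal.aleph0_le_mk V)
      obtain ⟨g, hg⟩ := Cardinal.extend_function_of_lt f hlt hne
      exact ⟨g, g.injective, fun v hv => hg ⟨v, hv⟩⟩

lemma renaming_of_condensations [DecidableEq P] [DecidableEq V] [DecidableEq C]
    (Cl Dl₁ Dl₂ : Finset (FOLit P V C))
    (h1 : IsCondensation Dl₁ Cl) (h2 : IsCondensation Dl₂ Cl) :
    IsRenamingOf Dl₁ Dl₂ := by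
  classical
  obtain ⟨hsub1, ⟨σ₁, hσ₁⟩, hmin1⟩ := h1
  obtain ⟨hsub2, ⟨σ₂, hσ₂⟩, hmin2⟩ := h2
  have hcard : Dl₁.card = Dl₂.card :=
    le_antisymm (hmin1 Dl₂ hsub2 ⟨σ₂, hσ₂⟩) (hmin2 Dl₁ hsub1 ⟨σ₁, hσ₁⟩)
  set θ : V → FOTerm V C := fun v => substT σ₁ (σ₂ v) with hθdef
  have hθ : ∀ l ∈ Cl, substLit θ l ∈ Dl₁ := by
    intro l hl
    rw [hθdef, ← substLit_comp]
    exact hσ₁ _ (hsub2 (hσ₂ l hl))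
  have hEsub : Dl₁.image (substLit θ) ⊆ Dl₁ := by
    intro x hx
    obtain ⟨l, hl, rfl⟩ := Finset.mem_image.mp hx
    exact hθ l (hsub1 hl)
  have hsubE : Subsumes Cl (Dl₁.image (substLit θ)) := by
    refine ⟨fun v => substT θ (θ v), fun l hl => ?_⟩
    rw [← substLit_comp]
    exact Finset.mem_image_of_mem _ (hθ l hl)
  have hcardE : (Dl₁.image (substLit θ)).card = Dl₁.card :=
    le_antisymm Finset.card_image_le (hmin1 _ (hEsub.trans hsub1) hsubE)
  have hEeq : Dl₁.image (substLit θ) = Dl₁ :=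
    Finset.eq_of_subset_of_card_le hEsub (le_of_eq hcardE.symm)
  have hinjθ : Set.InjOn (substLit θ) (Dl₁ : Set (FOLit P V C)) := Finset.card_image_iff.mp hcardE
  -- variable counts are preserved literalwise
  have hsum : ∑ l ∈ Dl₁, varCount (substLit θ l) = ∑ l ∈ Dl₁, varCount l := by
    calc ∑ l ∈ Dl₁, varCount (substLit θ l)
        = ∑ l ∈ Dl₁.image (substLit θ), varCount l :=
          (Finset.sum_image fun x hx y hy hxy => hinjθ hx hy hxy).symm
      _ = ∑ l ∈ Dl₁, varCount l := by rw [hEeq]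
  have hvc : ∀ l ∈ Dl₁, varCount (substLit θ l) = varCount l :=
    (Finset.sum_eq_sum_iff_of_le fun l _ => varCount_subst_le θ l).mp hsum
  set W : Finset V := Dl₁.biUnion litVars with hWdef
  have hWvar : ∀ v ∈ W, ∃ u, θ v = FOTerm.var u := by
    intro v hv
    obtain ⟨l, hl, hvl⟩ := Finset.mem_biUnion.mp hv
    exact vars_to_vars (le_of_eq (hvc l hl).symm) v hvl
  set g : V → V := fun v => if h : ∃ u, θ v = FOTerm.var u then h.choose else v with hgdef
  have hg : ∀ v ∈ W, θ v = FOTerm.var (g v) := by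
    intro v hv
    have hex := hWvar v hv
    simp only [hgdef, dif_pos hex]
    exact hex.choose_spec
  have hWsub : W ⊆ W.image g := by
    intro v hv
    obtain ⟨l, hl, hvl⟩ := Finset.mem_biUnion.mp hv
    obtain ⟨l', hl', rfl⟩ := Finset.mem_image.mp (hEeq ▸ hl)
    obtain ⟨w, hw, hθw⟩ := mem_litVars_subst.mp hvl
    have hwW : w ∈ W := Finset.mem_biUnion.mpr ⟨l', hl', hw⟩
    have hgw : g w = v := by
      have h' := hg w hwW
      rw [hθw] at h'
      exact (FOTerm.var.injEq _ _ ▸ h').symm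
    exact Finset.mem_image.mpr ⟨w, hwW, hgw⟩
  have hWeq : W.image g = W :=
    (Finset.eq_of_subset_of_card_le hWsub Finset.card_image_le).symm
  have hginj : Set.InjOn g ↑W :=
    Finset.card_image_iff.mp (by rw [hWeq])
  set h2f : V → V := fun v => if h : ∃ u, σ₂ v = FOTerm.var u then h.choose else v with h2fdef
  have hh : ∀ v ∈ W, σ₂ v = FOTerm.var (h2f v) := by
    intro v hv
    have hgv := hg v hv
    cases hσv : σ₂ v with
    | const c =>
        exfalso
        have hc : θ v = FOTerm.const c := by rw [hθdef]; simp only; rw [hσv]; rfl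
        rw [hgv] at hc
        exact nomatch hc
    | var u =>
        have hex : ∃ u', σ₂ v = FOTerm.var u' := ⟨u, hσv⟩
        simp only [h2fdef, dif_pos hex]
        rw [← hσv]
        exact hex.choose_spec
  have hhinj : Set.InjOn h2f ↑W := by
    intro a ha b hb hab
    apply hginj ha hb
    have hθab : θ a = θ b := by
      rw [hθdef]
      simp only
      rw [hh a ha, hh b hb, hab]
    have := (hg a ha).symm.trans (hθab.trans (hg b hb))
    exact FOTerm.var.injEq _ _ ▸ this
  obtain ⟨ρ, hρinj, hρ⟩ := exists_injective_extend W h2f hhinj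
  refine ⟨ρ, hρinj, ?_⟩
  have himg : Dl₁.image (substLit fun v => FOTerm.var (ρ v)) = Dl₁.image (substLit σ₂) := by
    apply Finset.image_congr
    intro l hl
    apply substLit_congr
    intro v hv
    have hvW : v ∈ W := Finset.mem_biUnion.mpr ⟨l, hl, hv⟩
    rw [hρ v hvW, ← hh v hvW]
  have hsubD2 : Dl₁.image (substLit σ₂) ⊆ Dl₂ := by
    intro x hx
    obtain ⟨l, hl, rfl⟩ := Finset.mem_image.mp hx
    exact hσ₂ l (hsub1 hl)
  have hinj2 : Set.InjOn (substLit σ₂) (Dl₁ : Set (FOLit P V C)) := by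
    intro a ha b hb hab
    apply hinjθ ha hb
    have h' : substLit σ₁ (substLit σ₂ a) = substLit σ₁ (substLit σ₂ b) := by rw [hab]
    rw [substLit_comp, substLit_comp] at h'
    rw [hθdef]
    exact h'
  have hcard2 : (Dl₁.image (substLit σ₂)).card = Dl₂.card := by
    rw [Finset.card_image_of_injOn hinj2, hcard]
  exact himg.trans (Finset.eq_of_subset_of_card_le hsubD2 (le_of_eq hcard2.symm))

end CondAux

/-- the condensation of a clause is unique up to variable renaming:
any two condensations of `Cl` are variants of each other. -/
theorem condensation_unique_up_to_renaming {P V C : Type}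
    [DecidableEq P] [DecidableEq V] [DecidableEq C]
    (Cl Dl₁ Dl₂ : Finset (FOLit P V C))
    (h1 : IsCondensation Dl₁ Cl) (h2 : IsCondensation Dl₂ Cl) :
    IsRenamingOf Dl₁ Dl₂ ∧ IsRenamingOf Dl₂ Dl₁ := by
  exact ⟨CondAux.renaming_of_condensations Cl Dl₁ Dl₂ h1 h2,
    CondAux.renaming_of_condensations Cl Dl₂ Dl₁ h2 h1⟩
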